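/- There exists a universal constant C > 0 with the following property: for any two closed axis-parallel squares Q and Q' in ℝ² of equal side length δ > 0 whose centers are at Euclidean distance d ≥ δ, one has ∫₀^π |proj_θ(Q) ∩ proj_θ(Q')| dθ ≤ C · δ²/d. -/

import Mathlib

open MeasureTheory Real Set

noncomputable section

/-- Orthogonal projection in direction `θ`: `proj_θ (x, y) = x cos θ + y sin θ`. -/
def projAngle (θ : ℝ) (p : ℝ × ℝ) : ℝ := p.1 * Real.cos θ + p.2 * Real.sin θ

/-- Euclidean distance on `ℝ × ℝ`. -/
def euclDist (p q : ℝ × ℝ) : ℝ := Real.sqrt ((p.1 - q.1) ^ 2 + (p.2 - q.2) ^ 2)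

/-- The closed axis-parallel square with center `p` and side length `δ`. -/
def squareAt (p : ℝ × ℝ) (δ : ℝ) : Set (ℝ × ℝ) :=
  Icc (p.1 - δ / 2) (p.1 + δ / 2) ×ˢ Icc (p.2 - δ / 2) (p.2 + δ / 2)

end

set_option maxHeartbeats 1000000 in
/-- There is a universal `C > 0` such that for any two closed axis-parallel squares of
equal side length `δ > 0` whose centers are at Euclidean distance `d ≥ δ`,
`∫₀^π |proj_θ(Q) ∩ proj_θ(Q')| dθ ≤ C · δ² / d`. -/
theorem integral_projection_intersection_squares_le :
    ∃ C : ℝ, 0 < C ∧ ∀ (δ d : ℝ) (p q : ℝ × ℝ), 0 < δ → δ ≤ d → euclDist p q = d →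
      (∫ θ in (0 : ℝ)..π,
        (volume (projAngle θ '' squareAt p δ ∩ projAngle θ '' squareAt q δ)).toReal) ≤
        C * δ ^ 2 / d := by
  refine ⟨13, by norm_num, ?_⟩
  intro δ d p q hδ hδd hdist
  have hd : 0 < d := lt_of_lt_of_le hδ hδd
  have hπ : (0:ℝ) < π := Real.pi_pos
  set u : ℝ := p.1 - q.1 with hu
  set v : ℝ := p.2 - q.2 with hv
  have hd2 : u ^ 2 + v ^ 2 = d ^ 2 := by
    have h0 : (0:ℝ) ≤ u ^ 2 + v ^ 2 := by positivity
    have := Real.sq_sqrt h0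
    rw [euclDist] at hdist
    nlinarith [this, hdist]
  set z : ℂ := ⟨u, v⟩ with hz
  have habs : ‖z‖ = d := by
    rw [Complex.norm_def, Complex.normSq_mk]
    rw [show u * u + v * v = d ^ 2 by nlinarith]
    exact Real.sqrt_sq hd.le
  have hzne : z ≠ 0 := by
    intro h
    rw [h] at habs
    simp at habs
    linarith
  set φ : ℝ := Complex.arg z with hφ
  have hcos : Real.cos φ = u / d := by
    rw [hφ, Complex.cos_arg hzne, habs]
  have hsin : Real.sin φ = v / d := by
    rw [hφ, Complex.sin_arg, habs]
  -- key identity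
  have hkeyid : ∀ θ : ℝ, projAngle θ p - projAngle θ q = d * Real.cos (θ - φ) := by
    intro θ
    rw [Real.cos_sub, hcos, hsin, projAngle, projAngle]
    field_simp
    ring
  -- the dominating function
  set g : ℝ → ℝ := fun θ => max 0 (2 * δ - d * |Real.cos (θ - φ)|) with hg
  have hg_cont : Continuous g := by
    apply Continuous.max continuous_const
    exact (continuous_const.sub (continuous_const.mul
      ((Real.continuous_cos.comp (continuous_id.sub continuous_const)).abs)))
  -- pointwise bound
  have key : ∀ θ : ℝ,
      (volume (projAngle θ '' squareAt p δ ∩ projAngle θ '' squareAt q δ)).toReal ≤ g θ := by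
    intro θ
    set a := projAngle θ p with ha
    set b := projAngle θ q with hb
    have himg : ∀ r : ℝ × ℝ, ∀ w ∈ projAngle θ '' squareAt r δ, |w - projAngle θ r| ≤ δ := by
      rintro r w ⟨⟨x, y⟩, hxy, rfl⟩
      obtain ⟨hx, hy⟩ := hxy
      simp only [mem_Icc] at hx hy
      have h1 : |x - r.1| ≤ δ / 2 := abs_le.2 ⟨by linarith [hx.1], by linarith [hx.2]⟩
      have h2 : |y - r.2| ≤ δ / 2 := abs_le.2 ⟨by linarith [hy.1], by linarith [hy.2]⟩
      have : projAngle θ (x, y) - projAngle θ r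
          = (x - r.1) * Real.cos θ + (y - r.2) * Real.sin θ := by
        simp [projAngle]; ring
      rw [this]
      calc |(x - r.1) * Real.cos θ + (y - r.2) * Real.sin θ|
          ≤ |(x - r.1) * Real.cos θ| + |(y - r.2) * Real.sin θ| := abs_add_le _ _
        _ = |x - r.1| * |Real.cos θ| + |y - r.2| * |Real.sin θ| := by rw [abs_mul, abs_mul]
        _ ≤ (δ / 2) * 1 + (δ / 2) * 1 := by
            gcongr
            · exact Real.abs_cos_le_one θ
            · exact Real.abs_sin_le_one θ
        _ = δ := by ring
    have hsub : projAngle θ '' squareAt p δ ∩ projAngle θ '' squareAt q δ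
        ⊆ Icc (max a b - δ) (min a b + δ) := by
      rintro w ⟨hwa, hwb⟩
      have h1 := abs_le.1 (himg p w hwa)
      have h2 := abs_le.1 (himg q w hwb)
      constructor
      · rcases max_cases a b with ⟨h, _⟩ | ⟨h, _⟩ <;> rw [h] <;> linarith [h1.1, h2.1]
      · rcases min_cases a b with ⟨h, _⟩ | ⟨h, _⟩ <;> rw [h] <;> linarith [h1.2, h2.2]
    have hvol : volume (projAngle θ '' squareAt p δ ∩ projAngle θ '' squareAt q δ)
        ≤ ENNReal.ofReal (min a b + δ - (max a b - δ)) := by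
      calc volume (projAngle θ '' squareAt p δ ∩ projAngle θ '' squareAt q δ)
          ≤ volume (Icc (max a b - δ) (min a b + δ)) := measure_mono hsub
        _ = ENNReal.ofReal (min a b + δ - (max a b - δ)) := by rw [Real.volume_Icc]
    have htr := ENNReal.toReal_mono (by simp) hvol
    rw [ENNReal.toReal_ofReal'] at htr
    refine htr.trans ?_
    have hminmax : min a b + δ - (max a b - δ) = 2 * δ - |a - b| := by
      rcases le_total a b with h | h
      · rw [min_eq_left h, max_eq_right h, abs_of_nonpos (by linarith)]; ring
      · rw [min_eq_right h, max_eq_left h, abs_of_nonneg (by linarith)]; ring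
    rw [hminmax, ha, hb, hkeyid θ, abs_mul, abs_of_pos hd, hg, max_comm]
  -- the target bound for the dominating function
  set k : ℝ := d / (π * δ) with hk
  have hkpos : 0 < k := by positivity
  have hgbound : (∫ θ in (0:ℝ)..π, g θ) ≤ 13 * δ ^ 2 / d := by
    -- shift by periodicity
    have hper : Function.Periodic g π := by
      intro θ
      have : θ + π - φ = (θ - φ) + π := by ring
      simp only [hg, this, Real.cos_add_pi, abs_neg]
    have h1 : (∫ θ in (0:ℝ)..π, g θ) = ∫ θ in φ..(φ + π), g θ := by
      have := hper.intervalIntegral_add_eq 0 φ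
      simpa using this
    have h2 : (∫ s in (-(π/2))..(π/2), g (s + (φ + π/2))) = ∫ θ in φ..(φ + π), g θ := by
      have := intervalIntegral.integral_comp_add_right (a := -(π/2)) (b := π/2)
        (f := g) (φ + π / 2)
      rw [this]
      congr 1 <;> ring
    have h3 : ∀ s : ℝ, g (s + (φ + π/2)) = max 0 (2 * δ - d * |Real.sin s|) := by
      intro s
      have : s + (φ + π/2) - φ = s + π/2 := by ring
      rw [hg]
      simp only [this, Real.cos_add_pi_div_two, abs_neg]
    -- dominate by exponential
    have hF_cont : Continuous fun s : ℝ => 2 * δ * Real.exp (-k * |s|) := by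
      apply continuous_const.mul
      exact Real.continuous_exp.comp (continuous_const.mul continuous_abs)
    have h4 : (∫ s in (-(π/2))..(π/2), g (s + (φ + π/2)))
        ≤ ∫ s in (-(π/2))..(π/2), 2 * δ * Real.exp (-k * |s|) := by
      apply intervalIntegral.integral_mono_on (by linarith)
      · exact ((hg_cont.comp (continuous_id.add continuous_const)).intervalIntegrable _ _)
      · exact hF_cont.intervalIntegrable _ _
      · intro s hs
        rw [h3 s]
        have habs2 : |s| ≤ π / 2 := abs_le.2 ⟨by linarith [hs.1], by linarith [hs.2]⟩
        have hjordan : 2 / π * |s| ≤ |Real.sin s| := by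
          have h := Real.mul_le_sin (abs_nonneg s) habs2
          refine h.trans ?_
          rcases abs_cases s with ⟨he, _⟩ | ⟨he, _⟩
          · rw [he]; exact le_abs_self _
          · rw [he, Real.sin_neg]; exact neg_le_abs _
        have hexp : 1 + (-(k * |s|)) ≤ Real.exp (-(k * |s|)) := by
          have := Real.add_one_le_exp (-(k * |s|))
          linarith
        have hkabs : k * |s| = d * (2 / π * |s|) / (2 * δ) := by
          rw [hk]; field_simp
        apply max_le
        · positivity
        · have h5 : 2 * δ - d * |Real.sin s| ≤ 2 * δ - d * (2 / π * |s|) := by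
            nlinarith [hjordan, hd.le]
          refine h5.trans ?_
          have : 2 * δ - d * (2 / π * |s|) = 2 * δ * (1 + (-(k * |s|))) := by
            rw [hkabs]; field_simp; ring
          rw [this, show -k * |s| = -(k * |s|) by ring]
          nlinarith [hexp, hδ]
    -- compute the exponential integral
    have hsplit : (∫ s in (-(π/2))..(π/2), 2 * δ * Real.exp (-k * |s|))
        = (∫ s in (-(π/2))..(0:ℝ), 2 * δ * Real.exp (-k * |s|))
          + ∫ s in (0:ℝ)..(π/2), 2 * δ * Real.exp (-k * |s|) := by
      rw [intervalIntegral.integral_add_adjacent_intervals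
        (hF_cont.intervalIntegrable _ _) (hF_cont.intervalIntegrable _ _)]
    have hneg : (∫ s in (-(π/2))..(0:ℝ), 2 * δ * Real.exp (-k * |s|))
        = ∫ s in (0:ℝ)..(π/2), 2 * δ * Real.exp (-k * |s|) := by
      have := intervalIntegral.integral_comp_neg (a := (0:ℝ)) (b := π/2)
        (f := fun s => 2 * δ * Real.exp (-k * |s|))
      simp only [abs_neg, neg_zero] at this
      rw [← this]
    have hpos : (∫ s in (0:ℝ)..(π/2), 2 * δ * Real.exp (-k * |s|)) ≤ 2 * δ / k := by
      have hcongr : (∫ s in (0:ℝ)..(π/2), 2 * δ * Real.exp (-k * |s|))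
          = ∫ s in (0:ℝ)..(π/2), 2 * δ * Real.exp (-k * s) := by
        apply intervalIntegral.integral_congr
        intro s hs
        rw [Set.uIcc_of_le (by linarith)] at hs
        simp only [abs_of_nonneg hs.1]
      rw [hcongr]
      have hftc : (∫ s in (0:ℝ)..(π/2), 2 * δ * Real.exp (-k * s))
          = (-(2*δ/k) * Real.exp (-k * (π/2))) - (-(2*δ/k) * Real.exp (-k * 0)) := by
        apply intervalIntegral.integral_eq_sub_of_hasDerivAt
          (f := fun s : ℝ => -(2*δ/k) * Real.exp (-k * s))
        · intro s _
          have h1 : HasDerivAt (fun s : ℝ => -k * s) (-k) s := by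
            simpa using (hasDerivAt_id s).const_mul (-k)
          have h2 : HasDerivAt (fun s : ℝ => Real.exp (-k * s))
              (Real.exp (-k * s) * (-k)) s := (Real.hasDerivAt_exp _).comp s h1
          have h3 := h2.const_mul (-(2*δ/k))
          exact h3.congr_deriv (by
            rw [mul_comm (Real.exp _) (-k), ← mul_assoc, neg_mul_neg, div_mul_cancel₀ _ hkpos.ne'])
        · exact ((continuous_const.mul (Real.continuous_exp.comp
            (continuous_const.mul continuous_id))).intervalIntegrable _ _)
      rw [hftc]
      have he1 : Real.exp (-k * (π/2)) ≤ 1 := Real.exp_le_one_iff.2 (by nlinarith)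
      have he2 : 0 < Real.exp (-k * (π/2)) := Real.exp_pos _
      have hkd : 0 < 2 * δ / k := by positivity
      rw [show -k * 0 = (0:ℝ) by ring, Real.exp_zero]
      nlinarith
    -- put together
    have hfin : (∫ θ in (0:ℝ)..π, g θ) ≤ 4 * δ / k := by
      rw [h1, ← h2]
      calc (∫ s in (-(π/2))..(π/2), g (s + (φ + π/2)))
          ≤ ∫ s in (-(π/2))..(π/2), 2 * δ * Real.exp (-k * |s|) := h4
        _ = _ + _ := hsplit
        _ ≤ 2 * δ / k + 2 * δ / k := by rw [hneg]; linarith [hpos]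
        _ = 4 * δ / k := by ring
    refine hfin.trans ?_
    have hkk : 4 * δ / k = 4 * π * δ ^ 2 / d := by
      rw [hk]; field_simp
    rw [hkk]
    gcongr
    nlinarith [Real.pi_lt_d2, hδ, mul_pos hδ hδ]
  -- conclude
  by_cases hf : IntervalIntegrable
      (fun θ => (volume (projAngle θ '' squareAt p δ ∩ projAngle θ '' squareAt q δ)).toReal)
      volume 0 π
  · calc (∫ θ in (0:ℝ)..π,
        (volume (projAngle θ '' squareAt p δ ∩ projAngle θ '' squareAt q δ)).toReal)
        ≤ ∫ θ in (0:ℝ)..π, g θ := by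
          apply intervalIntegral.integral_mono_on hπ.le hf (hg_cont.intervalIntegrable _ _)
          exact fun θ _ => key θ
      _ ≤ 13 * δ ^ 2 / d := hgbound
  · rw [intervalIntegral.integral_undef hf]
    positivity
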